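/- K_fin = SL₂(ℤ) · K₁(N): every element of GL₂(Ẑ) can be written as a product of an element of SL₂(ℤ) (embedded diagonally) and an element of K₁(N), where K₁(N) = {(a b; c d) ∈ GL₂(Ẑ) : c ≡ 0, d ≡ 1 mod N·Ẑ}. -/

import Mathlib

instance factPrimeOfPrimes (p : Nat.Primes) : Fact (Nat.Prime (p : ℕ)) := ⟨p.2⟩

/-- The profinite completion `Ẑ = ∏_p ℤ_p` of `ℤ`. -/
abbrev Zhat : Type := ∀ p : Nat.Primes, PadicInt (p : ℕ)

open Matrix


lemma natCast_dvd_int' {p : ℕ} {d : ℤ} : (p:ℤ) ∣ d ↔ p ∣ d.natAbs := by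
  rw [← Int.natAbs_dvd_natAbs, Int.natAbs_natCast]

lemma exists_coprime_lift_aux (N : ℕ) (c d : ℤ) (hc : c ≠ 0)
    (h : ∀ e : ℕ, (e:ℤ) ∣ c → (e:ℤ) ∣ d → e ∣ N → e = 1) :
    ∃ d' : ℤ, (N:ℤ) ∣ d' - d ∧ IsCoprime c d' := by
  classical
  set m : ℕ := ∏ p ∈ c.natAbs.primeFactors.filter (fun p => ¬ p ∣ d.natAbs), p with hm
  refine ⟨d + N * m, ⟨m, by ring⟩, ?_⟩
  rw [Int.isCoprime_iff_gcd_eq_one]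
  by_contra hg
  obtain ⟨p, hp, hpg⟩ := Nat.exists_prime_and_dvd hg
  have hpc : (p:ℤ) ∣ c := dvd_trans (Int.natCast_dvd_natCast.mpr hpg) (Int.gcd_dvd_left _ _)
  have hpd' : (p:ℤ) ∣ d + N * m := dvd_trans (Int.natCast_dvd_natCast.mpr hpg) (Int.gcd_dvd_right _ _)
  by_cases hpd : p ∣ d.natAbs
  · have hpm : ¬ p ∣ m := by
      intro hdvd
      obtain ⟨q, hq, hpq⟩ := (hp.prime.dvd_finset_prod_iff _).mp hdvd
      have hq' := Finset.mem_filter.mp hq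
      have hqprime : Nat.Prime q := Nat.prime_of_mem_primeFactors hq'.1
      exact hq'.2 (((Nat.prime_dvd_prime_iff_eq hp hqprime).mp hpq) ▸ hpd)
    have hpN : ¬ p ∣ N := fun hdvd =>
      hp.one_lt.ne' (h p hpc (natCast_dvd_int'.mpr hpd) hdvd)
    have : (p:ℤ) ∣ (N:ℤ) * m := by
      have := dvd_sub hpd' (natCast_dvd_int'.mpr hpd)
      simpa using this
    have : p ∣ N * m := by
      rwa [natCast_dvd_int', Int.natAbs_mul, Int.natAbs_natCast, Int.natAbs_natCast] at this
    rcases (Nat.Prime.dvd_mul hp).mp this with h1 | h1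
    · exact hpN h1
    · exact hpm h1
  · have hpmem : p ∈ c.natAbs.primeFactors.filter (fun p => ¬ p ∣ d.natAbs) := by
      refine Finset.mem_filter.mpr ⟨Nat.mem_primeFactors.mpr ⟨hp, natCast_dvd_int'.mp hpc, ?_⟩, hpd⟩
      simpa using hc
    have hpm : p ∣ m := Finset.dvd_prod_of_mem _ hpmem
    have : (p:ℤ) ∣ d := by
      have : (p:ℤ) ∣ (d + N * m) - (N:ℤ) * m := by
        refine dvd_sub hpd' ?_
        exact Dvd.dvd.mul_left (Int.natCast_dvd_natCast.mpr hpm) _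
      simpa using this
    exact hpd (natCast_dvd_int'.mp this)

lemma exists_coprime_lift (N : ℕ) (c d : ℤ)
    (h : ∀ e : ℕ, (e:ℤ) ∣ c → (e:ℤ) ∣ d → e ∣ N → e = 1) :
    ∃ c' d' : ℤ, (N:ℤ) ∣ c' - c ∧ (N:ℤ) ∣ d' - d ∧ IsCoprime c' d' := by
  by_cases hc : c = 0
  · subst hc
    by_cases hN : N = 0
    · subst hN
      refine ⟨0, d, by simp, by simp, ?_⟩
      rw [Int.isCoprime_iff_gcd_eq_one, Int.gcd_zero_left]
      exact h d.natAbs (dvd_zero _) (Int.natAbs_dvd.mpr dvd_rfl) (dvd_zero _)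
    · obtain ⟨d', h1, h2⟩ := exists_coprime_lift_aux N (N:ℤ) d (by exact_mod_cast hN)
        (fun e h1 h2 h3 => h e (dvd_zero _) h2 h3)
      exact ⟨(N:ℤ), d', by simp, h1, h2⟩
  · obtain ⟨d', h1, h2⟩ := exists_coprime_lift_aux N c d hc h
    exact ⟨c, d', by simp, h1, h2⟩

lemma SL2_lift (N : ℕ) (hN : 0 < N) (S : Matrix (Fin 2) (Fin 2) (ZMod N)) (hS : S.det = 1) :
    ∃ γ : Matrix.SpecialLinearGroup (Fin 2) ℤ,
      (γ : Matrix (Fin 2) (Fin 2) ℤ).map (Int.cast : ℤ → ZMod N) = S := by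
  haveI : NeZero N := ⟨hN.ne'⟩
  set c : ℤ := ((S 1 0).val : ℤ) with hc
  set d : ℤ := ((S 1 1).val : ℤ) with hd
  have hcS : ((c : ℤ) : ZMod N) = S 1 0 := by simp [hc]
  have hdS : ((d : ℤ) : ZMod N) = S 1 1 := by simp [hd]
  -- common divisor condition
  have hgcd : ∀ e : ℕ, (e:ℤ) ∣ c → (e:ℤ) ∣ d → e ∣ N → e = 1 := by
    intro e h1 h2 h3
    set x : ℤ := ((S 0 0).val : ℤ)
    set y : ℤ := ((S 0 1).val : ℤ)
    have hxS : ((x : ℤ) : ZMod N) = S 0 0 := by simp [x]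
    have hyS : ((y : ℤ) : ZMod N) = S 0 1 := by simp [y]
    have hdet : S 0 0 * S 1 1 - S 0 1 * S 1 0 = 1 := by rw [← det_fin_two]; exact hS
    have hNdvd : (N:ℤ) ∣ x * d - y * c - 1 := by
      rw [← ZMod.intCast_zmod_eq_zero_iff_dvd]
      push_cast
      rw [hxS, hyS, hcS, hdS, hdet]
      ring
    have he1 : (e:ℤ) ∣ x * d - y * c := dvd_sub (h2.mul_left x) (h1.mul_left y)
    have he : (e:ℤ) ∣ 1 := by
      have : (e:ℤ) ∣ x * d - y * c - 1 := dvd_trans (Int.natCast_dvd_natCast.mpr h3) hNdvd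
      have := dvd_sub he1 this
      simpa using this
    exact Nat.dvd_one.mp (by exact_mod_cast natCast_dvd_int'.mp he)
  obtain ⟨c', d', hc', hd', hcop⟩ := exists_coprime_lift N c d hgcd
  obtain ⟨a, b, hab⟩ := hcop
  set γ₀ : Matrix.SpecialLinearGroup (Fin 2) ℤ :=
    ⟨!![b, -a; c', d'], by rw [det_fin_two_of]; linear_combination hab⟩ with hγ₀
  set G : Matrix (Fin 2) (Fin 2) (ZMod N) :=
    (γ₀ : Matrix (Fin 2) (Fin 2) ℤ).map (Int.cast : ℤ → ZMod N) with hG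
  have hG10 : G 1 0 = S 1 0 := by
    rw [← hcS]
    show ((c' : ℤ) : ZMod N) = _
    rw [← sub_eq_zero, ← Int.cast_sub, ZMod.intCast_zmod_eq_zero_iff_dvd]
    exact hc'
  have hG11 : G 1 1 = S 1 1 := by
    rw [← hdS]
    show ((d' : ℤ) : ZMod N) = _
    rw [← sub_eq_zero, ← Int.cast_sub, ZMod.intCast_zmod_eq_zero_iff_dvd]
    exact hd'
  have hGdet : G.det = 1 := by
    rw [hG]
    show (((Int.castRingHom (ZMod N)).mapMatrix) (γ₀ : Matrix (Fin 2) (Fin 2) ℤ)).det = 1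
    rw [← RingHom.map_det, γ₀.det_coe]
    simp
  set T : Matrix (Fin 2) (Fin 2) (ZMod N) := S * G.adjugate with hT
  have hTG : T * G = S := by
    rw [hT, Matrix.mul_assoc, Matrix.adjugate_mul, hGdet, one_smul, Matrix.mul_one]
  have hadj : G.adjugate = !![G 1 1, -(G 0 1); -(G 1 0), G 0 0] := adjugate_fin_two G
  have hT10 : T 1 0 = 0 := by
    rw [hT, Matrix.mul_apply, Fin.sum_univ_two, hadj]
    show S 1 0 * G 1 1 + S 1 1 * -(G 1 0) = 0
    rw [hG10, hG11]; ring
  have hT11 : T 1 1 = 1 := by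
    rw [hT, Matrix.mul_apply, Fin.sum_univ_two, hadj]
    show S 1 0 * -(G 0 1) + S 1 1 * G 0 0 = 1
    rw [← hG10, ← hG11, ← hGdet, det_fin_two]; ring
  have hT00 : T 0 0 = 1 := by
    have hdetT : T.det = 1 := by
      rw [hT, det_mul, Matrix.det_adjugate, hGdet, hS]
      simp
    rw [det_fin_two, hT10, hT11] at hdetT
    simpa using hdetT
  set t : ℤ := ((T 0 1).val : ℤ) with ht
  have htT : ((t : ℤ) : ZMod N) = T 0 1 := by simp [ht]
  refine ⟨(show Matrix.SpecialLinearGroup (Fin 2) ℤ from ⟨!![1, t; 0, 1], by rw [det_fin_two_of]; ring⟩) * γ₀, ?_⟩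
  rw [Matrix.SpecialLinearGroup.coe_mul]
  have : ((!![1, t; 0, 1] : Matrix (Fin 2) (Fin 2) ℤ).map (Int.cast : ℤ → ZMod N)) = T := by
    ext i j
    fin_cases i <;> fin_cases j <;>
      simp [Matrix.map_apply, hT00, hT10, hT11, htT]
  calc (!![1, t; 0, 1] * (γ₀ : Matrix (Fin 2) (Fin 2) ℤ)).map (Int.cast : ℤ → ZMod N)
      = (!![1, t; 0, 1] : Matrix (Fin 2) (Fin 2) ℤ).map (Int.cast : ℤ → ZMod N) * G := by
        rw [hG]; exact Matrix.map_mul (f := Int.castRingHom (ZMod N))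
    _ = T * G := by rw [this]
    _ = S := hTG

lemma exists_redhom (N : ℕ) (hN : 0 < N) :
    ∃ φ : Zhat →+* ZMod N, ∀ x : Zhat, φ x = 0 → (N : Zhat) ∣ x := by
  classical
  set ι := {p : ℕ // p ∈ N.primeFactors} with hι
  have hpr : ∀ i : ι, Nat.Prime i.1 := fun i => Nat.prime_of_mem_primeFactors i.2
  set a : ι → ℕ := fun i => i.1 ^ N.factorization i.1 with ha
  have hcop : Pairwise (Function.onFun Nat.Coprime a) := by
    intro i j hij
    exact Nat.Coprime.pow _ _ ((Nat.coprime_primes (hpr i) (hpr j)).mpr (fun h => hij (Subtype.ext h)))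
  have hprod : (∏ i : ι, a i) = N := by
    have h2 := Nat.factorization_prod_pow_eq_self hN.ne'
    rw [Finsupp.prod, Nat.support_factorization] at h2
    exact (Finset.prod_coe_sort _ _).trans h2
  set e : ZMod N ≃+* ∀ i : ι, ZMod (a i) :=
    (ZMod.ringEquivCongr hprod.symm).trans (ZMod.prodEquivPi a hcop) with he
  set ψ : Zhat →+* ∀ i : ι, ZMod (a i) :=
    Pi.ringHom (fun i => (@PadicInt.toZModPow i.1 ⟨hpr i⟩ (N.factorization i.1)).comp
      (Pi.evalRingHom (fun p : Nat.Primes => ℤ_[(p:ℕ)]) (⟨i.1, hpr i⟩ : Nat.Primes))) with hψ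
  refine ⟨e.symm.toRingHom.comp ψ, ?_⟩
  intro x hx
  have hψ0 : ψ x = 0 := by
    have h' : e (e.symm (ψ x)) = e 0 := congrArg e hx
    rwa [RingEquiv.apply_symm_apply, map_zero] at h'
  have key : ∀ q : Nat.Primes, ∃ y : ℤ_[(q:ℕ)], x q = (N : ℤ_[(q:ℕ)]) * y := by
    intro q
    have h1 : (((q:ℕ) ^ N.factorization q : ℕ) : ℤ_[(q:ℕ)]) ∣ x q := by
      by_cases hq : (q:ℕ) ∈ N.primeFactors
      · have h2 := congrFun hψ0 ⟨(q:ℕ), hq⟩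
        rw [hψ] at h2
        simp only [Pi.ringHom_apply, RingHom.comp_apply, Pi.evalRingHom_apply, Pi.zero_apply] at h2
        have h3 : x q ∈ RingHom.ker (@PadicInt.toZModPow (q:ℕ) ⟨q.2⟩ (N.factorization q)) := h2
        rw [PadicInt.ker_toZModPow, Ideal.mem_span_singleton] at h3
        simpa using h3
      · have hv : N.factorization q = 0 := by
          apply Nat.factorization_eq_zero_of_not_dvd
          exact fun hdvd => hq (Nat.mem_primeFactors.mpr ⟨q.2, hdvd, hN.ne'⟩)
        rw [hv, pow_zero]
        exact one_dvd _
    set m : ℕ := N / (q:ℕ) ^ N.factorization q with hm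
    have h2 : IsUnit ((m : ℕ) : ℤ_[(q:ℕ)]) := by
      have hqm : ¬ (q:ℕ) ∣ m := Nat.not_dvd_ordCompl q.2 hN.ne'
      have hlt : ¬ ‖((m:ℤ) : ℤ_[(q:ℕ)])‖ < 1 := by
        rw [PadicInt.norm_int_lt_one_iff_dvd]
        exact fun hdvd => hqm (Int.natCast_dvd_natCast.mp hdvd)
      have heq : ‖((m:ℤ) : ℤ_[(q:ℕ)])‖ = 1 :=
        le_antisymm (PadicInt.norm_le_one _) (not_lt.mp hlt)
      rw [PadicInt.isUnit_iff]
      rwa [show ((m:ℤ) : ℤ_[(q:ℕ)]) = ((m:ℕ) : ℤ_[(q:ℕ)]) by push_cast; ring] at heq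
    obtain ⟨c, hc⟩ := h1
    have hNm : ((q:ℕ) ^ N.factorization q * m : ℕ) = N := Nat.ordProj_mul_ordCompl_eq_self N q
    have hN' : (N : ℤ_[(q:ℕ)]) =
        (((q:ℕ) ^ N.factorization q : ℕ) : ℤ_[(q:ℕ)]) * (h2.unit : ℤ_[(q:ℕ)]) := by
      rw [h2.unit_spec, ← Nat.cast_mul, hNm]
    refine ⟨(h2.unit⁻¹ : _) * c, ?_⟩
    rw [hN', hc, mul_assoc, ← mul_assoc ((h2.unit : ℤ_[(q:ℕ)])), Units.mul_inv, one_mul]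
  choose y hy using key
  exact ⟨y, funext fun q => hy q⟩


/-- `K_fin = SL₂(ℤ)·K₁(N)`: every element of `GL₂(Ẑ)` is the product of an element of
`SL₂(ℤ)` (embedded diagonally) and an element of
`K₁(N) = {(a b; c d) ∈ GL₂(Ẑ) : c ≡ 0, d ≡ 1 mod N·Ẑ}`. -/
theorem GL2Zhat_eq_SL2Z_mul_K1 (N : ℕ) (hN : 0 < N)
    (k : Matrix (Fin 2) (Fin 2) Zhat) (hk : IsUnit k.det) :
    ∃ (γ : Matrix.SpecialLinearGroup (Fin 2) ℤ) (u : Matrix (Fin 2) (Fin 2) Zhat),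
      IsUnit u.det ∧ (N : Zhat) ∣ u 1 0 ∧ (N : Zhat) ∣ (u 1 1 - 1) ∧
      k = ((γ : Matrix (Fin 2) (Fin 2) ℤ).map (Int.cast : ℤ → Zhat)) * u := by
  classical
  obtain ⟨φ, hφker⟩ := exists_redhom N hN
  set M : Matrix (Fin 2) (Fin 2) (ZMod N) := k.map φ with hM
  have hMdet : IsUnit M.det := by
    have : φ k.det = M.det := by
      rw [hM]
      exact (RingHom.map_det φ k).trans (by rw [RingHom.mapMatrix_apply])
    rw [← this]
    exact hk.map φ
  set d : (ZMod N)ˣ := hMdet.unit with hd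
  set D : Matrix (Fin 2) (Fin 2) (ZMod N) := !![(d : ZMod N), 0; 0, 1] with hD
  set S : Matrix (Fin 2) (Fin 2) (ZMod N) := M * !![((d⁻¹ : (ZMod N)ˣ) : ZMod N), 0; 0, 1]
    with hS
  have hSdet : S.det = 1 := by
    rw [hS, Matrix.det_mul, Matrix.det_fin_two_of]
    rw [show M.det = (d : ZMod N) from hMdet.unit_spec.symm]
    simp [Units.mul_inv]
  obtain ⟨γ, hγ⟩ := SL2_lift N hN S hSdet
  set γ' : Matrix (Fin 2) (Fin 2) Zhat :=
    (γ : Matrix (Fin 2) (Fin 2) ℤ).map (Int.cast : ℤ → Zhat) with hγ'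
  have hγdet : γ'.det = 1 := by
    rw [hγ']
    show (((Int.castRingHom Zhat).mapMatrix) (γ : Matrix (Fin 2) (Fin 2) ℤ)).det = 1
    rw [← RingHom.map_det, γ.det_coe]
    simp
  set u : Matrix (Fin 2) (Fin 2) Zhat := γ'.adjugate * k with hu
  have hudet : IsUnit u.det := by
    rw [hu, Matrix.det_mul, Matrix.det_adjugate, hγdet]
    simpa using hk
  have hmapu : u.map φ = D := by
    have h2 : γ'.map φ = S := by
      rw [hγ', Matrix.map_map, ← hγ]
      ext i j
      exact map_intCast φ _
    have h1 : u.map φ = S.adjugate * M := by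
      rw [hu, hM]
      have := Matrix.map_mul (L := γ'.adjugate) (M := k) (f := φ)
      rw [this]
      congr 1
      rw [← h2]
      have := RingHom.map_adjugate φ γ'
      rw [RingHom.mapMatrix_apply, RingHom.mapMatrix_apply] at this
      exact this
    have h3 : S * D = M := by
      rw [hS, hD, Matrix.mul_assoc]
      have : (!![((d⁻¹ : (ZMod N)ˣ) : ZMod N), 0; 0, 1] : Matrix (Fin 2) (Fin 2) (ZMod N)) *
          !![(d : ZMod N), 0; 0, 1] = 1 := by
        rw [Matrix.mul_fin_two, Matrix.one_fin_two]
        simp [Units.inv_mul]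
      rw [this, Matrix.mul_one]
    rw [h1, ← h3, ← Matrix.mul_assoc, Matrix.adjugate_mul, hSdet, one_smul, Matrix.one_mul]
  refine ⟨γ, u, hudet, ?_, ?_, ?_⟩
  · apply hφker
    have := congrFun (congrFun hmapu 1) 0
    rw [hD] at this
    simpa [Matrix.map_apply] using this
  · apply hφker
    have := congrFun (congrFun hmapu 1) 1
    rw [hD] at this
    simp only [Matrix.map_apply] at this
    rw [map_sub, this]
    simp
  · rw [hu, ← Matrix.mul_assoc, Matrix.mul_adjugate, hγdet, one_smul, Matrix.one_mul]
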